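/- On the Lie algebra r'_2 with brackets [e1,e3]=e3, [e1,e4]=e4, [e2,e3]=e4, [e2,e4]=-e3, let J be the orthogonal almost complex structure (with respect to the metric making e1,...,e4 orthonormal) defined by Je1 = -b2 e3 - b3 e4, Je2 = -b3 e3 + b2 e4, Je3 = b2 e1 + b3 e2, Je4 = b3 e1 - b2 e2, where b2² + b3² = 1. Then the Nijenhuis tensor satisfies N(e1,e2) = (1/2)(b2²+b3²) e2 ≠ 0; in particular J is not integrable. -/
import Mathlib


/-- The bracket of r'_2: [e1,e3]=e3, [e1,e4]=e4, [e2,e3]=e4, [e2,e4]=-e3. -/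
def br2 (X Y : Fin 4 → ℝ) : Fin 4 → ℝ :=
  ![0, 0,
    (X 0 * Y 2 - X 2 * Y 0) - (X 1 * Y 3 - X 3 * Y 1),
    (X 0 * Y 3 - X 3 * Y 0) + (X 1 * Y 2 - X 2 * Y 1)]

/-- The orthogonal almost complex structure Je1=-b2e3-b3e4, Je2=-b3e3+b2e4,
Je3=b2e1+b3e2, Je4=b3e1-b2e2. -/
def Jb (b2 b3 : ℝ) (X : Fin 4 → ℝ) : Fin 4 → ℝ :=
  ![b2 * X 2 + b3 * X 3, b3 * X 2 - b2 * X 3,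
    -b2 * X 0 - b3 * X 1, -b3 * X 0 + b2 * X 1]

/-- basis vectors -/
def E (i : Fin 4) : Fin 4 → ℝ := Pi.single i 1

/-- N(e1,e2) = (1/2)(b2²+b3²) e2 ≠ 0, where
N(X,Y) = (1/4)([JX,JY] - J[JX,Y] - J[X,JY] - [X,Y]); in particular J is not integrable. -/
theorem stmt_10 (b2 b3 : ℝ) (h : b2 ^ 2 + b3 ^ 2 = 1) :
    ((1 / 4 : ℝ) • (br2 (Jb b2 b3 (E 0)) (Jb b2 b3 (E 1))
        - Jb b2 b3 (br2 (Jb b2 b3 (E 0)) (E 1))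
        - Jb b2 b3 (br2 (E 0) (Jb b2 b3 (E 1)))
        - br2 (E 0) (E 1))
      = ((1 / 2) * (b2 ^ 2 + b3 ^ 2)) • E 1) ∧
    ((1 / 2) * (b2 ^ 2 + b3 ^ 2)) • E 1 ≠ (0 : Fin 4 → ℝ) := by
  constructor
  · funext i
    fin_cases i <;>
      simp [br2, Jb, E, Pi.single, Function.update, Pi.smul_apply, Pi.sub_apply] <;> ring
  · intro h0
    have := congrFun h0 1
    rw [h] at this
    simp [E, Pi.single, Function.update] at this
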